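/- For arbitrary complex numbers c₁,…,c_N, the following multilinear expansion of a determinant holds: ∑_{h∈{0,1}^N} ( ∏_{n=1}^N c_n^{1−h_n} ) · V(ξ₁ − (1−h₁)η, …, ξ_N − (1−h_N)η) = 2^{−N(N−1)/2} · det_{1≤i,j≤N} [ e^{(2j−N−1)ξ_i} + c_i · e^{(2j−N−1)(ξ_i−η)} ], where the sum runs over all 2^N binary tuples h and c^0 = 1 by convention. -/

import Mathlib

open Complex Finset

noncomputable section

/-- generalized Vandermonde product `V(x₁,…,x_m) = ∏_{i<j} sinh(x_j − x_i)` -/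
def Vand {m : ℕ} (x : Fin m → ℂ) : ℂ :=
  ∏ i : Fin m, ∏ j ∈ Finset.Ioi i, Complex.sinh (x j - x i)

lemma pair_sinh (a b : ℂ) : Complex.sinh (b - a) =
    2⁻¹ * (Complex.exp (-a) * Complex.exp (-b) *
      (Complex.exp (2 * b) - Complex.exp (2 * a))) := by
  rw [Complex.sinh, mul_sub, ← Complex.exp_add, ← Complex.exp_add, ← Complex.exp_add]
  ring_nf

lemma sum_card_Ioi (N : ℕ) : ∑ i : Fin N, (Finset.Ioi i).card = N * (N - 1) / 2 := by
  simp only [Fin.card_Ioi]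
  rw [Fin.sum_univ_eq_sum_range (fun i => N - 1 - i) N, Finset.sum_range_reflect (fun i => i) N,
    Finset.sum_range_id]

lemma prod_pairs (N : ℕ) (hN : 1 ≤ N) (f : Fin N → ℂ) :
    (∏ i : Fin N, ∏ j ∈ Finset.Ioi i, (f i * f j)) = ∏ i : Fin N, f i ^ (N - 1) := by
  rw [Finset.prod_congr rfl (fun i _ => Finset.prod_mul_distrib), Finset.prod_mul_distrib]
  have h2 : (∏ i : Fin N, ∏ j ∈ Finset.Ioi i, f j) = ∏ j : Fin N, ∏ i ∈ Finset.Iio j, f j :=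
    Finset.prod_comm' (by simp [Finset.mem_Ioi, Finset.mem_Iio, and_comm])
  rw [h2]
  simp only [Finset.prod_const, Fin.card_Ioi, Fin.card_Iio]
  rw [← Finset.prod_mul_distrib]
  refine Finset.prod_congr rfl (fun i _ => ?_)
  rw [← pow_add]
  congr 1
  omega

lemma vand_eq_det (N : ℕ) (hN : 1 ≤ N) (x : Fin N → ℂ) :
    Vand x = ((2:ℂ) ^ (N*(N-1)/2))⁻¹ *
      Matrix.det (Matrix.of fun i j : Fin N =>
        Complex.exp ((2 * ((j:ℕ):ℂ) + 1 - (N:ℂ)) * x i)) := by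
  have hdet : Matrix.det (Matrix.of fun i j : Fin N =>
        Complex.exp ((2 * ((j:ℕ):ℂ) + 1 - (N:ℂ)) * x i)) =
      (∏ i, Complex.exp ((1 - (N:ℂ)) * x i)) *
        ∏ i : Fin N, ∏ j ∈ Finset.Ioi i,
          (Complex.exp (2 * x j) - Complex.exp (2 * x i)) := by
    have he : (Matrix.of fun i j : Fin N =>
          Complex.exp ((2 * ((j:ℕ):ℂ) + 1 - (N:ℂ)) * x i)) =
        Matrix.of fun i j : Fin N => Complex.exp ((1 - (N:ℂ)) * x i) *
          Matrix.vandermonde (fun k => Complex.exp (2 * x k)) i j := by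
      ext i j
      simp only [Matrix.of_apply, Matrix.vandermonde_apply]
      rw [← Complex.exp_nat_mul, ← Complex.exp_add]
      ring_nf
    rw [he, Matrix.det_mul_column, Matrix.det_vandermonde]
  rw [hdet]
  have hv : Vand x = (∏ i : Fin N, ∏ j ∈ Finset.Ioi i, (2⁻¹:ℂ)) *
      ((∏ i : Fin N, ∏ j ∈ Finset.Ioi i, (Complex.exp (-x i) * Complex.exp (-x j))) *
       (∏ i : Fin N, ∏ j ∈ Finset.Ioi i,
          (Complex.exp (2 * x j) - Complex.exp (2 * x i)))) := by
    rw [← Finset.prod_mul_distrib, ← Finset.prod_mul_distrib]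
    refine Finset.prod_congr rfl (fun i _ => ?_)
    rw [← Finset.prod_mul_distrib, ← Finset.prod_mul_distrib]
    exact Finset.prod_congr rfl (fun j _ => pair_sinh (x i) (x j))
  rw [hv]
  have h1 : (∏ i : Fin N, ∏ j ∈ Finset.Ioi i, (2⁻¹:ℂ)) = ((2:ℂ) ^ (N*(N-1)/2))⁻¹ := by
    simp only [Finset.prod_const]
    rw [Finset.prod_pow_eq_pow_sum, sum_card_Ioi, inv_pow]
  have h2 : (∏ i : Fin N, ∏ j ∈ Finset.Ioi i, (Complex.exp (-x i) * Complex.exp (-x j))) =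
      ∏ i : Fin N, Complex.exp ((1 - (N:ℂ)) * x i) := by
    rw [prod_pairs N hN]
    refine Finset.prod_congr rfl (fun i _ => ?_)
    rw [← Complex.exp_nat_mul]
    congr 1
    rw [Nat.cast_sub hN]
    push_cast
    ring
  rw [h1, h2]

/-- The bijection between `Fin N → Fin 2` and subsets of `Fin N`. -/
def binEquiv (N : ℕ) : (Fin N → Fin 2) ≃ Finset (Fin N) where
  toFun h := Finset.univ.filter (fun i => h i = 1)
  invFun s := fun i => if i ∈ s then 1 else 0
  left_inv h := by
    funext i
    simp only [Finset.mem_filter, Finset.mem_univ, true_and]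
    rcases Fin.exists_fin_two.1 ⟨h i, rfl⟩ with h' | h' <;> simp_all
  right_inv s := by
    ext i
    simp

lemma det_add_rows (N : ℕ) (u v : Fin N → Fin N → ℂ) :
    Matrix.det (Matrix.of fun i j => u i j + v i j) =
      ∑ h : Fin N → Fin 2,
        Matrix.det (Matrix.of fun i j => if h i = 1 then u i j else v i j) := by
  have h0 : Matrix.det (Matrix.of fun i j => u i j + v i j) =
      (Matrix.detRowAlternating (R := ℂ) (n := Fin N)).toMultilinearMap (u + v) := rfl
  rw [h0, MultilinearMap.map_add_univ]
  rw [← Equiv.sum_comp (binEquiv N)]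
  refine Finset.sum_congr rfl (fun h _ => ?_)
  have : (binEquiv N h).piecewise u v = fun i => fun j => if h i = 1 then u i j else v i j := by
    funext i
    simp only [Finset.piecewise, binEquiv, Equiv.coe_fn_mk, Finset.mem_filter, Finset.mem_univ,
      true_and]
    split <;> simp_all
  rw [this]
  rfl

/-- Multilinear expansion of the twisted Vandermonde determinant:
`∑_{h∈{0,1}^N} (∏ c_n^{1−h_n}) V(ξ−(1−h)η)
   = 2^{−N(N−1)/2} det[ e^{(2j−N−1)ξ_i} + c_i e^{(2j−N−1)(ξ_i−η)} ]`. -/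
theorem multilinear_det_expansion (N : ℕ) (hN : 1 ≤ N) (η : ℂ) (ξ : Fin N → ℂ)
    (c : Fin N → ℂ) :
    (∑ h : Fin N → Fin 2,
        (∏ n, c n ^ (1 - (h n : ℕ))) *
          Vand (fun n => ξ n - ((1 - (h n : ℕ) : ℕ) : ℂ) * η)) =
      ((2 : ℂ) ^ (N * (N - 1) / 2))⁻¹ *
        Matrix.det (Matrix.of (fun i j : Fin N =>
          Complex.exp ((2 * ((j : ℕ) : ℂ) + 1 - (N : ℂ)) * ξ i) +
            c i * Complex.exp ((2 * ((j : ℕ) : ℂ) + 1 - (N : ℂ)) * (ξ i - η)))) := by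
  rw [det_add_rows N (fun i j => Complex.exp ((2 * ((j : ℕ) : ℂ) + 1 - (N : ℂ)) * ξ i))
    (fun i j => c i * Complex.exp ((2 * ((j : ℕ) : ℂ) + 1 - (N : ℂ)) * (ξ i - η))),
    Finset.mul_sum]
  refine Finset.sum_congr rfl (fun h _ => ?_)
  rw [vand_eq_det N hN]
  have hc : (∏ n, c n ^ (1 - (h n : ℕ))) = ∏ n, (if h n = 1 then 1 else c n) := by
    refine Finset.prod_congr rfl (fun n _ => ?_)
    rcases Fin.exists_fin_two.1 ⟨h n, rfl⟩ with h' | h' <;> simp [h']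
  have hM : (Matrix.of fun i j : Fin N => (if h i = 1 then (1:ℂ) else c i) *
        Complex.exp ((2 * ((j:ℕ):ℂ) + 1 - (N:ℂ)) * (ξ i - ((1 - (h i : ℕ) : ℕ) : ℂ) * η))) =
      Matrix.of (fun i j : Fin N =>
        if h i = 1 then Complex.exp ((2 * ((j : ℕ) : ℂ) + 1 - (N : ℂ)) * ξ i)
          else c i * Complex.exp ((2 * ((j : ℕ) : ℂ) + 1 - (N : ℂ)) * (ξ i - η))) := by
    ext i j
    simp only [Matrix.of_apply]
    rcases Fin.exists_fin_two.1 ⟨h i, rfl⟩ with h' | h' <;> simp [h']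
  calc (∏ n, c n ^ (1 - (h n : ℕ))) *
        (((2:ℂ) ^ (N*(N-1)/2))⁻¹ *
          Matrix.det (Matrix.of fun i j : Fin N =>
            Complex.exp ((2 * ((j:ℕ):ℂ) + 1 - (N:ℂ)) *
              (ξ i - ((1 - (h i : ℕ) : ℕ) : ℂ) * η))))
      = ((2:ℂ) ^ (N*(N-1)/2))⁻¹ *
          ((∏ n, (if h n = 1 then (1:ℂ) else c n)) *
            Matrix.det (Matrix.of fun i j : Fin N =>
              Complex.exp ((2 * ((j:ℕ):ℂ) + 1 - (N:ℂ)) *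
                (ξ i - ((1 - (h i : ℕ) : ℕ) : ℂ) * η)))) := by rw [hc]; ring
    _ = ((2:ℂ) ^ (N*(N-1)/2))⁻¹ *
          Matrix.det (Matrix.of fun i j : Fin N => (if h i = 1 then (1:ℂ) else c i) *
            Complex.exp ((2 * ((j:ℕ):ℂ) + 1 - (N:ℂ)) *
              (ξ i - ((1 - (h i : ℕ) : ℕ) : ℂ) * η))) := by
        congr 1
        exact (Matrix.det_mul_column (fun i => if h i = 1 then (1:ℂ) else c i)
          (Matrix.of fun i j : Fin N => Complex.exp ((2 * ((j:ℕ):ℂ) + 1 - (N:ℂ)) *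
            (ξ i - ((1 - (h i : ℕ) : ℕ) : ℂ) * η)))).symm
    _ = _ := by rw [hM]

end
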